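/- arXiv:2012.04730 — 2 statements merged into one kernel-verified Lean document; each statement's English description precedes it below -/
import Mathlib

section
/- Every tensor rank function is a QZC rank function: axioms (TR1)–(TR6) imply axioms (QZC1)–(QZC6). -/
open scoped BigOperators

/-- An order-`N` real tensor with mode sizes `I n`. -/
abbrev Tensor (N : ℕ) (I : Fin N → ℕ) : Type :=
  ((n : Fin N) → Fin (I n)) → ℝ

/-- A rank-one tensor is an outer product of nonzero vectors. -/
def IsRankOne {N : ℕ} {I : Fin N → ℕ} (X : Tensor N I) : Prop :=
  ∃ a : (n : Fin N) → Fin (I n) → ℝ, (∀ n, a n ≠ 0) ∧ ∀ i, X i = ∏ n, a n (i n)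

/-- The order-`N` identity tensor `I_{M,N}`: ones on the diagonal, zeros elsewhere. -/
def idTensor (M N : ℕ) : Tensor N (fun _ => M) :=
  fun i => if ∀ n m : Fin N, i n = i m then 1 else 0

/-- The matrix associated to a tensor of shape `I₁ × I₂ × 1 × ⋯ × 1`. -/
def assocMatrix {N : ℕ} {I : Fin N → ℕ} (h2 : 2 ≤ N)
    (h1 : ∀ n : Fin N, 2 ≤ n.val → I n = 1) (X : Tensor N I) :
    Matrix (Fin (I ⟨0, by omega⟩)) (Fin (I ⟨1, by omega⟩)) ℝ :=
  Matrix.of fun p q =>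
    X (fun m =>
      if e0 : m = ⟨0, by omega⟩ then Fin.cast (congrArg I e0.symm) p
      else if e1 : m = ⟨1, by omega⟩ then Fin.cast (congrArg I e1.symm) q
      else Fin.cast (h1 m (by
        have v0 : m.val ≠ 0 := fun hh => e0 (Fin.ext hh)
        have v1 : m.val ≠ 1 := fun hh => e1 (Fin.ext hh)
        omega)).symm 0)

/-- Permutation of the modes of a tensor. -/
def permute {N : ℕ} (I : Fin N → ℕ) (π : Equiv.Perm (Fin N)) (X : Tensor N I) :
    Tensor N (fun m => I (π m)) :=
  fun i => X (fun m => Fin.cast (congrArg I (π.apply_symm_apply m)) (i (π.symm m)))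

/-- `Y` is a subtensor of `X` : it is obtained by selecting, in each mode, an
increasing subset of the indices. -/
def IsSubtensor {N : ℕ} {J I : Fin N → ℕ} (Y : Tensor N J) (X : Tensor N I) : Prop :=
  ∃ f : (n : Fin N) → Fin (J n) → Fin (I n),
    (∀ n, StrictMono (f n)) ∧ ∀ i, Y i = X (fun n => f n (i n))

/-- The mode-`n` unfolding of a tensor, as a matrix whose columns are the
mode-`n` fibers. -/
def modeUnfold {N : ℕ} {I : Fin N → ℕ} (X : Tensor N I) (n : Fin N) :
    Matrix (Fin (I n)) ((m : {m : Fin N // m ≠ n}) → Fin (I m.1)) ℝ :=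
  Matrix.of fun p j =>
    X (fun m => if h : m = n then Fin.cast (congrArg I h.symm) p else j ⟨m, h⟩)

/-- The mode-`n` matrix product `X ×ₙ A`. -/
def modeMul {N : ℕ} {I : Fin N → ℕ} (X : Tensor N I) (n : Fin N) {J : ℕ}
    (A : Matrix (Fin J) (Fin (I n)) ℝ) : Tensor N (Function.update I n J) :=
  fun i => ∑ t : Fin (I n),
    A (Fin.cast (by simp) (i n)) t *
      X (fun m =>
        if h : m = n then Fin.cast (congrArg I h.symm) t
        else Fin.cast (by rw [Function.update_of_ne h]) (i m))

/-- Appending a trailing mode of dimension 1 to a tensor. -/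
def snocOne {N : ℕ} {I : Fin N → ℕ} (X : Tensor N I) :
    Tensor (N + 1) (Fin.snoc I 1) :=
  fun i => X (fun m => Fin.cast (by simp) (i m.castSucc))

/-- The matrix associated to a tensor all of whose modes other than `n₁, n₂`
have dimension 1 (a "submatrix" shape). -/
def twoModeMatrix {N : ℕ} {J : Fin N → ℕ} (Z : Tensor N J) (n₁ n₂ : Fin N)
    (h1 : ∀ m, m ≠ n₁ → m ≠ n₂ → J m = 1) : Matrix (Fin (J n₁)) (Fin (J n₂)) ℝ :=
  Matrix.of fun p q =>
    Z (fun m =>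
      if h : m = n₁ then Fin.cast (congrArg J h.symm) p
      else if h' : m = n₂ then Fin.cast (congrArg J h'.symm) q
      else Fin.cast (h1 m h h').symm 0)

/-- A rank function assigns a natural number to every real tensor. -/
def RankFun : Type :=
  ∀ (N : ℕ) (I : Fin N → ℕ), Tensor N I → ℕ

/-- The axioms (QZC1)–(QZC6) of Qi, Zhang and Chen for a tensor rank function. -/
structure IsQZCRankFn (r : RankFun) : Prop where
  zero_iff : ∀ (N : ℕ), 0 < N → ∀ (I : Fin N → ℕ) (X : Tensor N I),
    r N I X = 0 ↔ X = 0
  one_iff : ∀ (N : ℕ), 0 < N → ∀ (I : Fin N → ℕ) (X : Tensor N I),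
    r N I X = 1 ↔ IsRankOne X
  id_eq : ∀ (M N : ℕ), 2 ≤ N → r N (fun _ => M) (idTensor M N) = M
  matrix_eq : ∀ (N : ℕ) (h2 : 2 ≤ N) (I : Fin N → ℕ)
    (h1 : ∀ n : Fin N, 2 ≤ n.val → I n = 1) (X : Tensor N I),
    r N I X = (assocMatrix h2 h1 X).rank
  smul_eq : ∀ (N : ℕ), 0 < N → ∀ (I : Fin N → ℕ) (α : ℝ), α ≠ 0 →
    ∀ (X : Tensor N I), r N I (α • X) = r N I X
  perm_eq : ∀ (N : ℕ), 0 < N → ∀ (I : Fin N → ℕ) (π : Equiv.Perm (Fin N))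
    (X : Tensor N I), r N (fun m => I (π m)) (permute I π X) = r N I X
  subtensor_le : ∀ (N : ℕ), 0 < N → ∀ (I J : Fin N → ℕ) (X : Tensor N I)
    (Y : Tensor N J), IsSubtensor Y X → r N J Y ≤ r N I X

/-- The axioms (TR1)–(TR6) for a tensor rank function. -/
structure IsTensorRankFn (r : RankFun) : Prop where
  one_iff : ∀ (N : ℕ), 0 < N → ∀ (I : Fin N → ℕ) (X : Tensor N I),
    r N I X = 1 ↔ IsRankOne X
  id_eq : ∀ (M N : ℕ), 2 ≤ N → r N (fun _ => M) (idTensor M N) = M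
  matrix_eq : ∀ (I : Fin 2 → ℕ) (X : Tensor 2 I),
    r 2 I X = (assocMatrix (le_refl 2)
      (fun n hn => absurd n.isLt (Nat.not_lt.mpr hn)) X).rank
  snoc_eq : ∀ (N : ℕ), 0 < N → ∀ (I : Fin N → ℕ) (X : Tensor N I),
    r (N + 1) (Fin.snoc I 1) (snocOne X) = r N I X
  perm_eq : ∀ (N : ℕ), 0 < N → ∀ (I : Fin N → ℕ) (π : Equiv.Perm (Fin N))
    (X : Tensor N I), r N (fun m => I (π m)) (permute I π X) = r N I X
  modeMul_le : ∀ (N : ℕ), 0 < N → ∀ (I : Fin N → ℕ) (X : Tensor N I) (n : Fin N)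
    (J : ℕ) (A : Matrix (Fin J) (Fin (I n)) ℝ),
    r N (Function.update I n J) (modeMul X n A) ≤ r N I X

namespace TRaux

def castT {N : ℕ} {I J : Fin N → ℕ} (h : I = J) (X : Tensor N I) : Tensor N J := h ▸ X

lemma castT_apply {N : ℕ} {I J : Fin N → ℕ} (h : I = J) (X : Tensor N I)
    (i : (n : Fin N) → Fin (J n)) :
    castT h X i = X (fun n => Fin.cast (congrFun h n).symm (i n)) := by
  subst h; rfl

lemma r_castT (r : RankFun) {N : ℕ} {I J : Fin N → ℕ} (h : I = J) (X : Tensor N I) :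
    r N J (castT h X) = r N I X := by subst h; rfl

lemma rank_zero_mat {m n : ℕ} : (0 : Matrix (Fin m) (Fin n) ℝ).rank = 0 :=
  Matrix.rank_zero

end TRaux
namespace TRaux

lemma castT_zero {N : ℕ} {I J : Fin N → ℕ} (h : I = J) :
    castT h (0 : Tensor N I) = 0 := by subst h; rfl

lemma assocMatrix_zero {N : ℕ} (h2 : 2 ≤ N) {I : Fin N → ℕ}
    (h1 : ∀ n : Fin N, 2 ≤ n.val → I n = 1) :
    assocMatrix h2 h1 (0 : Tensor N I) = 0 := by
  ext p q; rfl

lemma r2_zero (r : RankFun) (hr : IsTensorRankFn r) (I : Fin 2 → ℕ) :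
    r 2 I 0 = 0 := by
  rw [hr.matrix_eq, assocMatrix_zero, Matrix.rank_zero]

lemma snocOne_zero {N : ℕ} {I : Fin N → ℕ} :
    snocOne (0 : Tensor N I) = 0 := rfl

lemma r_zero_shape_eq (r : RankFun) {N : ℕ} {I J : Fin N → ℕ} (h : I = J) :
    r N J (0 : Tensor N J) = r N I (0 : Tensor N I) := by
  rw [← r_castT r h 0, castT_zero]

-- all-ones shape zero tensor has rank 0
lemma r_ones_zero (r : RankFun) (hr : IsTensorRankFn r) :
    ∀ N : ℕ, 0 < N → r N (fun _ => 1) (0 : Tensor N fun _ => 1) = 0 := by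
  intro N hN
  induction N with
  | zero => omega
  | succ n ih =>
    rcases Nat.eq_or_lt_of_le hN with h | h
    · have h1 : n = 0 := by omega
      subst h1
      have hs := hr.snoc_eq 1 (by norm_num) (fun _ => 1) 0
      rw [snocOne_zero] at hs
      rw [← hs]
      exact r2_zero r hr _
    · have hn : 0 < n := by omega
      have hs := hr.snoc_eq n hn (fun _ => 1) 0
      rw [snocOne_zero, ih hn] at hs
      have hsh : (Fin.snoc (fun _ : Fin n => 1) 1 : Fin (n+1) → ℕ) = fun _ => 1 := by
        funext m; by_cases hm : m.val < n <;> simp [Fin.snoc, hm]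
      rw [r_zero_shape_eq r hsh]; exact hs

end TRaux
namespace TRaux

lemma modeMul_zero {N : ℕ} {I : Fin N → ℕ} (n : Fin N) {J : ℕ}
    (A : Matrix (Fin J) (Fin (I n)) ℝ) :
    modeMul (0 : Tensor N I) n A = 0 := by
  funext i; simp [modeMul]

lemma r_zero (r : RankFun) (hr : IsTensorRankFn r) (N : ℕ) (hN : 0 < N)
    (I : Fin N → ℕ) : r N I 0 = 0 := by
  have key : ∀ k : ℕ, r N (fun n => if n.val < k then I n else 1) 0 = 0 := by
    intro k
    induction k with
    | zero =>
      rw [r_zero_shape_eq r (I := fun _ => 1) (J := fun n : Fin N => if n.val < 0 then I n else 1) (by funext n; simp)]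
      exact r_ones_zero r hr N hN
    | succ k ih =>
      by_cases hk : k < N
      · set K : Fin N → ℕ := fun n => if n.val < k then I n else 1 with hK
        set n₀ : Fin N := ⟨k, hk⟩ with hn₀
        have hupd : (fun n : Fin N => if n.val < k + 1 then I n else 1)
            = Function.update K n₀ (I n₀) := by
          funext n
          by_cases hn : n = n₀
          · subst hn; simp [Function.update_self, K, hn₀]
          · have : n.val ≠ k := fun hv => hn (Fin.ext hv)
            rw [Function.update_of_ne hn]
            by_cases h' : n.val < k <;> simp [K, h'] <;> omega
        rw [r_zero_shape_eq r hupd.symm]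
        have := hr.modeMul_le N hN K 0 n₀ (I n₀) 0
        rw [modeMul_zero] at this
        omega
      · have hupd : (fun n : Fin N => if n.val < k + 1 then I n else 1)
            = fun n : Fin N => if n.val < k then I n else 1 := by
          funext n; have := n.isLt
          by_cases h' : n.val < k <;> simp [h'] <;> omega
        rw [r_zero_shape_eq r hupd.symm]; exact ih
  have hfin : (fun n : Fin N => if n.val < N then I n else 1) = I := by
    funext n; simp [n.isLt]
  rw [r_zero_shape_eq r hfin]
  exact key N

end TRaux
namespace TRaux

def pullT {N : ℕ} {I K : Fin N → ℕ} (X : Tensor N I)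
    (g : ∀ n, Fin (K n) → Fin (I n)) : Tensor N K :=
  fun i => X (fun n => g n (i n))

lemma r_pull_le (r : RankFun) (hr : IsTensorRankFn r) (N : ℕ) (hN : 0 < N)
    (I : Fin N → ℕ) (X : Tensor N I) (K : Fin N → ℕ)
    (g : ∀ n, Fin (K n) → Fin (I n)) :
    r N K (pullT X g) ≤ r N I X := by
  suffices H : ∀ k : ℕ, ∀ (K : Fin N → ℕ) (g : ∀ n, Fin (K n) → Fin (I n)),
      (∀ n : Fin N, k ≤ n.val → ∃ h : K n = I n,
        ∀ j : Fin (K n), ((g n j : ℕ)) = (j : ℕ)) →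
      r N K (pullT X g) ≤ r N I X by
    exact H N K g (fun n hn => absurd n.isLt (by omega))
  intro k
  induction k with
  | zero =>
    intro K g hg
    have hKI : K = I := funext fun n => (hg n (Nat.zero_le _)).1
    subst hKI
    have hgid : ∀ n (j : Fin (K n)), g n j = j := by
      intro n j; exact Fin.ext ((hg n (Nat.zero_le _)).2 j)
    have : pullT X g = X := by
      funext i; unfold pullT; congr 1; funext n; exact hgid n (i n)
    rw [this]
  | succ k ih =>
    intro K g hg
    by_cases hk : k < N
    · set n₀ : Fin N := ⟨k, hk⟩ with hn₀
      set K' : Fin N → ℕ := Function.update K n₀ (I n₀) with hK'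
      have e0 : K' n₀ = I n₀ := Function.update_self _ _ _
      have eNe : ∀ n, n ≠ n₀ → K' n = K n := fun n h => Function.update_of_ne h _ _
      set g' : ∀ n, Fin (K' n) → Fin (I n) := fun n j =>
        if h : n = n₀ then
          Fin.cast (show K' n = I n by rw [h]; exact e0) j
        else g n (Fin.cast (eNe n h) j) with hg'
      have hIH : r N K' (pullT X g') ≤ r N I X := by
        apply ih K' g'
        intro n hn
        by_cases h : n = n₀
        · subst h
          refine ⟨e0, fun j => ?_⟩
          simp [hg']
        · have hn1 : k + 1 ≤ n.val := by
            have : n.val ≠ k := fun hv => h (Fin.ext hv)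
            omega
          obtain ⟨hKn, hid⟩ := hg n hn1
          refine ⟨(eNe n h).trans hKn, fun j => ?_⟩
          simp [hg', h, hid]
      set A : Matrix (Fin (K n₀)) (Fin (K' n₀)) ℝ :=
        Matrix.of fun p t => if (t : ℕ) = ((g n₀ p : ℕ)) then 1 else 0 with hA
      have hupd : Function.update K' n₀ (K n₀) = K := by
        funext n
        by_cases h : n = n₀
        · subst h; simp [Function.update_self]
        · rw [Function.update_of_ne h, eNe n h]
      have key : castT hupd (modeMul (pullT X g') n₀ A) = pullT X g := by
        funext i
        rw [castT_apply]
        show (∑ t : Fin (K' n₀), _) = _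
        have : ∀ t : Fin (K' n₀),
            A (Fin.cast (by simp) (Fin.cast (congrFun hupd n₀).symm (i n₀))) t *
              (pullT X g') (fun m =>
                if h : m = n₀ then Fin.cast (congrArg K' h.symm) t
                else Fin.cast (by rw [Function.update_of_ne h])
                  (Fin.cast (congrFun hupd m).symm (i m))) =
            (if t = Fin.cast e0.symm (g n₀ (i n₀)) then
              (pullT X g') (fun m =>
                if h : m = n₀ then Fin.cast (congrArg K' h.symm) t
                else Fin.cast (by rw [Function.update_of_ne h])
                  (Fin.cast (congrFun hupd m).symm (i m))) else 0) := by
          intro t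
          by_cases ht : t = Fin.cast e0.symm (g n₀ (i n₀))
          · rw [if_pos ht]
            have : A (Fin.cast (by simp) (Fin.cast (congrFun hupd n₀).symm (i n₀))) t = 1 := by
              simp only [hA, Matrix.of_apply, ht, Fin.coe_cast]
              exact if_pos rfl
            rw [this, one_mul]
          · rw [if_neg ht]
            have : A (Fin.cast (by simp) (Fin.cast (congrFun hupd n₀).symm (i n₀))) t = 0 := by
              simp only [hA, Matrix.of_apply, Fin.coe_cast]
              exact if_neg (fun hv => ht (Fin.ext hv))
            rw [this, zero_mul]
        rw [Finset.sum_congr rfl (fun t _ => this t)]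
        rw [Finset.sum_ite_eq' Finset.univ (Fin.cast e0.symm (g n₀ (i n₀)))]
        simp only [Finset.mem_univ, if_true]
        show pullT X g' _ = pullT X g i
        unfold pullT
        congr 1
        funext m
        by_cases h : m = n₀
        · subst h
          apply Fin.ext
          simp [hg']
        · apply Fin.ext
          simp [hg', h]
      calc r N K (pullT X g)
          = r N (Function.update K' n₀ (K n₀)) (modeMul (pullT X g') n₀ A) := by
            rw [← key]; exact r_castT r hupd _
        _ ≤ r N K' (pullT X g') := hr.modeMul_le N hN K' (pullT X g') n₀ (K n₀) A
        _ ≤ r N I X := hIH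
    · exact ih K g (fun n hn => hg n (by omega))

end TRaux
namespace TRaux

lemma r_smul_le (r : RankFun) (hr : IsTensorRankFn r) (N : ℕ) (hN : 0 < N)
    (I : Fin N → ℕ) (α : ℝ) (X : Tensor N I) :
    r N I (α • X) ≤ r N I X := by
  set n₀ : Fin N := ⟨0, hN⟩ with hn₀
  set A : Matrix (Fin (I n₀)) (Fin (I n₀)) ℝ :=
    Matrix.of fun p t => if (t : ℕ) = (p : ℕ) then α else 0 with hA
  have hupd : Function.update I n₀ (I n₀) = I := Function.update_eq_self n₀ I
  have key : castT hupd (modeMul X n₀ A) = α • X := by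
    funext i
    rw [castT_apply]
    show (∑ t : Fin (I n₀), _) = _
    have hterm : ∀ t : Fin (I n₀),
        A (Fin.cast (by simp) (Fin.cast (congrFun hupd n₀).symm (i n₀))) t *
          X (fun m =>
            if h : m = n₀ then Fin.cast (congrArg I h.symm) t
            else Fin.cast (by rw [Function.update_of_ne h])
              (Fin.cast (congrFun hupd m).symm (i m))) =
        (if t = i n₀ then α *
          X (fun m =>
            if h : m = n₀ then Fin.cast (congrArg I h.symm) t
            else Fin.cast (by rw [Function.update_of_ne h])
              (Fin.cast (congrFun hupd m).symm (i m))) else 0) := by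
      intro t
      by_cases ht : t = i n₀
      · rw [if_pos ht]
        have : A (Fin.cast (by simp) (Fin.cast (congrFun hupd n₀).symm (i n₀))) t = α := by
          simp only [hA, Matrix.of_apply, Fin.coe_cast, ht]
          simp
        rw [this]
      · rw [if_neg ht]
        have : A (Fin.cast (by simp) (Fin.cast (congrFun hupd n₀).symm (i n₀))) t = 0 := by
          simp only [hA, Matrix.of_apply, Fin.coe_cast]
          exact if_neg (fun hv => ht (Fin.ext hv))
        rw [this, zero_mul]
    rw [Finset.sum_congr rfl (fun t _ => hterm t)]
    rw [Finset.sum_ite_eq' Finset.univ (i n₀)]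
    simp only [Finset.mem_univ, if_true]
    have : (fun m =>
        if h : m = n₀ then Fin.cast (congrArg I h.symm) (i n₀)
        else Fin.cast (by rw [Function.update_of_ne h] : Function.update I n₀ (I n₀) m = I m)
          (Fin.cast (congrFun hupd m).symm (i m))) = i := by
      funext m
      by_cases h : m = n₀
      · subst h; apply Fin.ext; simp
      · apply Fin.ext; simp [h]
    rw [this]
    simp
  calc r N I (α • X)
      = r N (Function.update I n₀ (I n₀)) (modeMul X n₀ A) := by
        rw [← key]; exact r_castT r hupd _
    _ ≤ r N I X := hr.modeMul_le N hN I X n₀ (I n₀) A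

lemma r_smul_eq (r : RankFun) (hr : IsTensorRankFn r) (N : ℕ) (hN : 0 < N)
    (I : Fin N → ℕ) (α : ℝ) (hα : α ≠ 0) (X : Tensor N I) :
    r N I (α • X) = r N I X := by
  refine le_antisymm (r_smul_le r hr N hN I α X) ?_
  have := r_smul_le r hr N hN I α⁻¹ (α • X)
  rwa [smul_smul, inv_mul_cancel₀ hα, one_smul] at this

end TRaux
namespace TRaux

lemma r_matrix (r : RankFun) (hr : IsTensorRankFn r) :
    ∀ (N : ℕ) (h2 : 2 ≤ N) (I : Fin N → ℕ)
      (h1 : ∀ n : Fin N, 2 ≤ n.val → I n = 1) (X : Tensor N I),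
      r N I X = (assocMatrix h2 h1 X).rank := by
  intro N
  induction N with
  | zero => intro h2; omega
  | succ N ih =>
    intro h2 I h1 X
    rcases Nat.lt_or_ge N 2 with hN2 | hN2
    · -- N + 1 = 2
      have hN : N = 1 := by omega
      subst hN
      exact hr.matrix_eq I X
    · -- N ≥ 2, reduce via snoc
      set I' : Fin N → ℕ := fun m => I m.castSucc with hI'
      have h1' : ∀ n : Fin N, 2 ≤ n.val → I' n = 1 := fun n hn =>
        h1 n.castSucc (by simpa using hn)
      set X' : Tensor N I' := fun i =>
        X (fun m =>
          if h : m.val < N then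
            Fin.cast (congrArg I (Fin.ext rfl : Fin.castSucc ⟨m.val, h⟩ = m))
              (i ⟨m.val, h⟩)
          else Fin.cast (h1 m (by omega)).symm 0) with hX'
      have hshape : I = Fin.snoc I' 1 := by
        funext m
        by_cases h : m.val < N
        · simp [Fin.snoc, h, hI']
        · simp [Fin.snoc, h]
          exact h1 m (by omega)
      have hsnoc : snocOne X' = castT hshape X := by
        funext j
        rw [castT_apply]
        simp only [snocOne, hX']
        congr 1
        funext m
        by_cases h : m.val < N
        · rw [dif_pos h]
          apply Fin.ext
          simp
        · rw [dif_neg h]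
          apply Fin.ext
          have hlt := (j m).isLt
          have he := (congrFun hshape m).symm.trans (h1 m (by omega))
          simp only [Fin.coe_cast, Fin.val_zero]
          omega
      have step1 : r (N+1) I X = r N I' X' := by
        rw [← r_castT r hshape X, ← hsnoc, hr.snoc_eq N (by omega) I' X']
      rw [step1, ih (by omega) I' h1' X']
      -- matrices are equal
      congr 1
      ext p q
      simp only [assocMatrix, Matrix.of_apply, hX']
      congr 1
      funext m
      by_cases h0 : m.val = 0
      · apply Fin.ext
        have hlt : m.val < N := by omega
        have hN0 : 0 < N := by omega
        simp [Fin.ext_iff, h0, hlt, hN0]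
        rfl
      · by_cases hone : m.val = 1
        · apply Fin.ext
          have hlt : m.val < N := by omega
          have hN1 : 1 < N := by omega
          simp [Fin.ext_iff, h0, hone, hlt, hN1]
        · apply Fin.ext
          by_cases hmN : m.val < N <;> simp [Fin.ext_iff, h0, hone, hmN]

end TRaux
/-- Every tensor rank function (axioms (TR1)–(TR6)) is a QZC rank function
(axioms (QZC1)–(QZC6)). -/
theorem isQZCRankFn_of_isTensorRankFn (r : RankFun) (hr : IsTensorRankFn r) :
    IsQZCRankFn r := by
  constructor
  · -- (QZC1) zero part
    intro N hN I X
    constructor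
    · intro h0
      by_contra hX
      have hex : ∃ i, X i ≠ 0 := by
        by_contra h
        push_neg at h
        exact hX (funext h)
      obtain ⟨i₀, hi₀⟩ := hex
      set g : ∀ n : Fin N, Fin ((fun _ => 1 : Fin N → ℕ) n) → Fin (I n) :=
        fun n _ => i₀ n with hg
      have hle := TRaux.r_pull_le r hr N hN I X (fun _ => 1) g
      have hone : r N (fun _ => 1) (TRaux.pullT X g) = 1 := by
        rw [hr.one_iff N hN]
        refine ⟨fun n _ => if n = ⟨0, hN⟩ then X i₀ else 1, ?_, ?_⟩
        · intro n hcontr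
          have := congrFun hcontr 0
          by_cases h : n = ⟨0, hN⟩ <;> simp [h] at this
          exact hi₀ this
        · intro i
          show X i₀ = _
          simp [Finset.prod_ite_eq']
      omega
    · intro h
      subst h
      exact TRaux.r_zero r hr N hN I
  · exact hr.one_iff
  · exact hr.id_eq
  · exact fun N h2 I h1 X => TRaux.r_matrix r hr N h2 I h1 X
  · exact fun N hN I α hα X => TRaux.r_smul_eq r hr N hN I α hα X
  · exact hr.perm_eq
  · intro N hN I J X Y hsub
    obtain ⟨f, _, hY⟩ := hsub
    have : Y = TRaux.pullT X f := funext hY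
    rw [this]
    exact TRaux.r_pull_le r hr N hN I X J f
end

section
/- If r is a tensor rank function, D is a diagonal tensor of order N ≥ 2 with exactly D nonzero diagonal entries, then r(D) ≥ D. In particular, a tensor rank function cannot assign to a diagonal tensor a rank smaller than the number of its nonzero diagonal entries. -/
open scoped BigOperators

namespace DiagAux

theorem rank_congr (r : RankFun) {N : ℕ} {J K : Fin N → ℕ} (hJK : J = K)
    (X : Tensor N J) (Y : Tensor N K)
    (hY : ∀ i, Y i = X fun n => Fin.cast (congrFun hJK.symm n) (i n)) :
    r N K Y = r N J X := by
  subst hJK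
  have h : Y = X := by
    funext i
    rw [hY]
    exact congrArg X (funext fun n => Fin.ext rfl)
  rw [h]

theorem modeMul_le' (r : RankFun) (hr : IsTensorRankFn r) {N : ℕ} (hN : 0 < N)
    (I : Fin N → ℕ) (X : Tensor N I) (n : Fin N) (J : ℕ)
    (A : Matrix (Fin J) (Fin (I n)) ℝ) {K : Fin N → ℕ}
    (hK : Function.update I n J = K) (Y : Tensor N K)
    (hY : ∀ i, Y i = modeMul X n A fun m => Fin.cast (congrFun hK.symm m) (i m)) :
    r N K Y ≤ r N I X := by
  subst hK
  have hYX : Y = modeMul X n A := by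
    funext i
    rw [hY]
    exact congrArg (modeMul X n A) (funext fun m => Fin.ext rfl)
  rw [hYX]
  exact hr.modeMul_le N hN I X n J A

/-- The partially reduced tensor: modes `< k` have been multiplied by the
selection matrices. -/
def Zk {N D : ℕ} (I : Fin N → ℕ) (X : Tensor N I) (t' : ℕ → ℕ)
    (ht' : ∀ n : Fin N, ∀ x, x < D → t' x < I n) (c' : ℕ → ℝ) (hN : 0 < N)
    (k : ℕ) : Tensor N (fun n => if (n : ℕ) < k then D else I n) :=
  fun i =>
    c' (i ⟨0, hN⟩ : ℕ) *
      X (fun n =>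
        ⟨if (n : ℕ) < k then t' (i n : ℕ) else (i n : ℕ), by
          by_cases h : (n : ℕ) < k
          · rw [if_pos h]
            exact ht' n _ (by simpa only [if_pos h] using (i n).isLt)
          · rw [if_neg h]
            simpa only [if_neg h] using (i n).isLt⟩)

/-- The diagonal index function built from a value map. -/
def diagIdx {N D : ℕ} (I : Fin N → ℕ) (t' : ℕ → ℕ)
    (ht' : ∀ n : Fin N, ∀ x, x < D → t' x < I n) (f : Fin N → ℕ)
    (hf : ∀ n, f n < D) : (n : Fin N) → Fin (I n) :=
  fun n => ⟨t' (f n), ht' n _ (hf n)⟩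

theorem diagIdx_congr {N D : ℕ} (I : Fin N → ℕ) (t' : ℕ → ℕ)
    (ht' : ∀ n : Fin N, ∀ x, x < D → t' x < I n) {f g : Fin N → ℕ}
    {hf : ∀ n, f n < D} {hg : ∀ n, g n < D} (h : ∀ n, f n = g n) :
    diagIdx I t' ht' f hf = diagIdx I t' ht' g hg :=
  funext fun n => Fin.ext (congrArg t' (h n))

theorem Zk_full {N D : ℕ} (I : Fin N → ℕ) (X : Tensor N I) (t' : ℕ → ℕ)
    (ht' : ∀ n : Fin N, ∀ x, x < D → t' x < I n) (c' : ℕ → ℝ) (hN : 0 < N)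
    (i : (n : Fin N) → Fin (if (n : ℕ) < N then D else I n)) :
    Zk I X t' ht' c' hN N i =
      c' (i ⟨0, hN⟩ : ℕ) *
        X (diagIdx I t' ht' (fun n => (i n : ℕ))
          (fun n => by simpa only [if_pos n.isLt] using (i n).isLt)) := by
  unfold Zk diagIdx
  congr 1
  refine congrArg X (funext fun n => Fin.ext ?_)
  simp only [if_pos n.isLt]

end DiagAux

/-- A tensor rank function assigns to a diagonal tensor of order `N ≥ 2` with
exactly `D` nonzero diagonal entries a rank of at least `D`. -/
theorem tensorRankFn_diagonal_ge (r : RankFun) (hr : IsTensorRankFn r)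
    (N : ℕ) (hN : 2 ≤ N) (I : Fin N → ℕ) (X : Tensor N I)
    (hdiag : ∀ i : (n : Fin N) → Fin (I n),
      (∃ n m : Fin N, (i n : ℕ) ≠ (i m : ℕ)) → X i = 0)
    (D : ℕ) (T : Finset ℕ) (hcard : T.card = D)
    (hlt : ∀ t ∈ T, ∀ n : Fin N, t < I n)
    (hnz : ∀ t, ∀ ht : t ∈ T, X (fun n => ⟨t, hlt t ht n⟩) ≠ 0)
    (hz : ∀ i : (n : Fin N) → Fin (I n), (∀ n m : Fin N, (i n : ℕ) = (i m : ℕ)) →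
      (∀ n, (i n : ℕ) ∉ T) → X i = 0) :
    D ≤ r N I X := by
  classical
  have hN0 : 0 < N := by omega
  set t' : ℕ → ℕ :=
    fun x => if h : x < D then ((T.orderIsoOfFin hcard ⟨x, h⟩ : ℕ)) else 0 with ht'def
  have htT : ∀ x, x < D → t' x ∈ T := by
    intro x hx
    simp only [ht'def, dif_pos hx]
    exact (T.orderIsoOfFin hcard ⟨x, hx⟩).2
  have ht' : ∀ n : Fin N, ∀ x, x < D → t' x < I n := fun n x hx => hlt _ (htT x hx) n
  have htinj : ∀ x y, x < D → y < D → t' x = t' y → x = y := by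
    intro x y hx hy h
    simp only [ht'def, dif_pos hx, dif_pos hy] at h
    exact congrArg Fin.val ((T.orderIsoOfFin hcard).injective (Subtype.ext h))
  set c' : ℕ → ℝ :=
    fun x => if h : x < D then (X fun n => ⟨t' x, ht' n x h⟩)⁻¹ else 0 with hc'def
  have hXd : ∀ x (hx : x < D),
      X (DiagAux.diagIdx I t' ht' (fun _ => x) (fun _ => hx)) ≠ 0 :=
    fun x hx => hnz _ (htT x hx)
  have main : ∀ k, 1 ≤ k → k ≤ N →
      r N (fun n => if (n : ℕ) < k then D else I n)
        (DiagAux.Zk I X t' ht' c' hN0 k) ≤ r N I X := by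
    intro k hk
    induction k, hk using Nat.le_induction with
    | base =>
      intro _
      refine DiagAux.modeMul_le' r hr hN0 I X ⟨0, hN0⟩ D
        (Matrix.of fun d j => if (j : ℕ) = t' (d : ℕ) then c' (d : ℕ) else 0) ?_ _ ?_
      · funext n
        by_cases h : n = ⟨0, hN0⟩
        · subst h; simp
        · rw [Function.update_of_ne h,
            if_neg (fun hv => h (Fin.ext (show (n : ℕ) = 0 by omega)))]
      · intro i
        have hi0 : ((i ⟨0, hN0⟩) : ℕ) < D := by
          simpa using (i ⟨0, hN0⟩).isLt
        unfold DiagAux.Zk modeMul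
        rw [Finset.sum_eq_single
          (⟨t' ((i ⟨0, hN0⟩) : ℕ), ht' _ _ hi0⟩ : Fin (I ⟨0, hN0⟩))]
        · simp only [Matrix.of_apply, Fin.coe_cast]
          rw [if_true]
          congr 1
          refine congrArg X (funext fun n => Fin.ext ?_)
          by_cases hn : n = ⟨0, hN0⟩
          · subst hn
            simp
          · have hv : ¬ (n : ℕ) < 1 := fun hv => hn (Fin.ext (show (n : ℕ) = 0 by omega))
            simp [hn, hv]
        · intro b _ hb
          simp only [Matrix.of_apply, Fin.coe_cast]
          rw [if_neg (fun hb' => hb (Fin.ext hb')), zero_mul]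
        · intro h
          exact absurd (Finset.mem_univ _) h
    | succ k hk ih =>
      intro hkN
      have hkN' : k < N := by omega
      refine le_trans (DiagAux.modeMul_le' r hr hN0 _ (DiagAux.Zk I X t' ht' c' hN0 k)
        ⟨k, hkN'⟩ D (Matrix.of fun d j => if (j : ℕ) = t' (d : ℕ) then 1 else 0) ?_ _ ?_)
        (ih (by omega))
      · funext n
        by_cases h : n = ⟨k, hkN'⟩
        · subst h
          simp
        · rw [Function.update_of_ne h]
          have hvk : (n : ℕ) ≠ k := fun hv => h (Fin.ext hv)
          by_cases h2 : (n : ℕ) < k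
          · rw [if_pos h2, if_pos (by omega)]
          · rw [if_neg h2, if_neg (by omega)]
      · intro i
        have hik : ((i ⟨k, hkN'⟩) : ℕ) < D := by
          simpa using (i ⟨k, hkN'⟩).isLt
        unfold DiagAux.Zk modeMul
        rw [Finset.sum_eq_single
          (⟨t' ((i ⟨k, hkN'⟩) : ℕ), by
              rw [if_neg (lt_irrefl k)]; exact ht' _ _ hik⟩ :
            Fin (if ((⟨k, hkN'⟩ : Fin N) : ℕ) < k then D else I ⟨k, hkN'⟩))]
        · simp only [Matrix.of_apply, Fin.coe_cast]
          rw [if_true, one_mul]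
          have h0k : (⟨0, hN0⟩ : Fin N) ≠ ⟨k, hkN'⟩ := by
            intro h
            have := congrArg Fin.val h
            simp at this
            omega
          simp only [dif_neg h0k, Fin.coe_cast]
          congr 1
          refine congrArg X (funext fun n => Fin.ext ?_)
          by_cases hn : n = ⟨k, hkN'⟩
          · subst hn
            simp [lt_irrefl]
          · have hvk : (n : ℕ) ≠ k := fun hv => hn (Fin.ext hv)
            by_cases h2 : (n : ℕ) < k
            · simp [hn, h2, show (n : ℕ) < k + 1 by omega]
            · simp [hn, h2, show ¬ (n : ℕ) < k + 1 by omega]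
        · intro b _ hb
          simp only [Matrix.of_apply, Fin.coe_cast]
          rw [if_neg (fun hb' => hb (Fin.ext hb')), zero_mul]
        · intro h
          exact absurd (Finset.mem_univ _) h
  have hJN : (fun n : Fin N => if (n : ℕ) < N then D else I n) = fun _ => D :=
    funext fun n => if_pos n.isLt
  have hid : r N (fun _ => D) (idTensor D N) =
      r N (fun n => if (n : ℕ) < N then D else I n)
        (DiagAux.Zk I X t' ht' c' hN0 N) := by
    refine DiagAux.rank_congr r hJN _ _ ?_
    intro i
    rw [DiagAux.Zk_full]
    have hd : ((i ⟨0, hN0⟩) : ℕ) < D := (i ⟨0, hN0⟩).isLt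
    by_cases hall : ∀ n m : Fin N, i n = i m
    · rw [show idTensor D N i = 1 from if_pos hall]
      rw [DiagAux.diagIdx_congr I t' ht'
        (f := fun n => ((Fin.cast (congrFun hJN.symm n) (i n)) : ℕ))
        (g := fun _ => ((i ⟨0, hN0⟩) : ℕ)) (hg := fun _ => hd)
        (fun n => congrArg Fin.val (hall n ⟨0, hN0⟩))]
      have hc : c' ((Fin.cast (congrFun hJN.symm ⟨0, hN0⟩) (i ⟨0, hN0⟩)) : ℕ) =
          (X (DiagAux.diagIdx I t' ht' (fun _ => ((i ⟨0, hN0⟩) : ℕ))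
            (fun _ => hd)))⁻¹ := by
        simp only [Fin.coe_cast, hc'def]
        rw [dif_pos hd]
        rfl
      rw [hc]
      exact (inv_mul_cancel₀ (hXd _ hd)).symm
    · rw [show idTensor D N i = 0 from if_neg hall]
      push_neg at hall
      obtain ⟨n, m, hnm⟩ := hall
      have hvne : ((i n) : ℕ) ≠ ((i m) : ℕ) := fun h => hnm (Fin.ext h)
      refine (mul_eq_zero_of_right _ ?_).symm
      exact hdiag _ ⟨n, m, fun h =>
        hvne (htinj _ _ (i n).isLt (i m).isLt h)⟩
  calc D = r N (fun _ => D) (idTensor D N) := (hr.id_eq D N hN).symm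
    _ = _ := hid
    _ ≤ r N I X := main N (by omega) le_rfl
end
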